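/- Let n ≥ 2m with m ≥ 1 and n ≥ 2. The real vector space s := {X ∈ Mₙ(ℂ) : Xᵀ H + H X̄ = 0 and X_{i1} = 0 for all i = 2,…,n} has real dimension n² − 2n + 3. (This space is the Lie algebra of the group S appearing in the paper's Lemma.) -/

import Mathlib

/- The standard Hermitian matrix of signature (n-m, m) in the anti-diagonal
block form (formformaminus) of the paper. -/
def Hmat (n m : ℕ) : Matrix (Fin n) (Fin n) ℂ := fun i j =>
  if i.1 + j.1 + 1 = n ∧ (i.1 < m ∨ n ≤ i.1 + m) then 1
  else if i = j ∧ m ≤ i.1 ∧ i.1 + m < n then 1 else 0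

/-- The real vector space s = {X ∈ u(H) : X_{i1} = 0 for i = 2,…,n}, the Lie
algebra of the group S of the paper's Lemma. -/
noncomputable def sAlg (n m : ℕ) : Submodule ℝ (Matrix (Fin n) (Fin n) ℂ) where
  carrier := {X | X.transpose * Hmat n m + Hmat n m * X.map (starRingEnd ℂ) = 0 ∧
    ∀ i : Fin n, i.1 ≠ 0 → X i ⟨0, Nat.pos_of_ne_zero (fun h => by subst h; exact absurd i.isLt (by omega))⟩ = 0}
  zero_mem' := by
    constructor
    · simp
    · intro i hi; simp
  add_mem' := by
    rintro X Y ⟨hX1, hX2⟩ ⟨hY1, hY2⟩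
    constructor
    · have hmap : (X + Y).map (starRingEnd ℂ) =
          X.map (starRingEnd ℂ) + Y.map (starRingEnd ℂ) := by
        ext i j; simp
      rw [Matrix.transpose_add, hmap, Matrix.add_mul, Matrix.mul_add]
      have : X.transpose * Hmat n m + Y.transpose * Hmat n m +
          (Hmat n m * X.map (starRingEnd ℂ) + Hmat n m * Y.map (starRingEnd ℂ)) =
          (X.transpose * Hmat n m + Hmat n m * X.map (starRingEnd ℂ)) +
          (Y.transpose * Hmat n m + Hmat n m * Y.map (starRingEnd ℂ)) := by abel
      rw [this, hX1, hY1, add_zero]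
    · intro i hi
      simp [Matrix.add_apply, hX2 i hi, hY2 i hi]
  smul_mem' := by
    rintro r X ⟨hX1, hX2⟩
    constructor
    · have hmap : (r • X).map (starRingEnd ℂ) = r • X.map (starRingEnd ℂ) := by
        ext i j
        simp [Matrix.map_apply, Complex.real_smul, map_mul, Complex.conj_ofReal]
      rw [Matrix.transpose_smul, hmap, smul_mul_assoc, mul_smul_comm, ← smul_add, hX1,
        smul_zero]
    · intro i hi
      simp [Matrix.smul_apply, hX2 i hi]

namespace Stmt4Aux

def sig (m : ℕ) {n : ℕ} (i : Fin n) : Fin n :=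
  if i.1 < m ∨ n ≤ i.1 + m then ⟨n - 1 - i.1, by have := i.isLt; omega⟩ else i

lemma sig_invol {n : ℕ} (m : ℕ) (i : Fin n) : sig m (sig m i) = i := by
  have hi := i.isLt
  unfold sig
  split_ifs with h1 h2 h3 <;>
    first
      | rfl
      | (apply Fin.ext; simp only [] at *; omega)

lemma hmat_apply {n m : ℕ} (i j : Fin n) :
    Hmat n m i j = if j = sig m i then 1 else 0 := by
  have hi := i.isLt; have hj := j.isLt
  unfold Hmat sig
  rcases i with ⟨i, hi'⟩; rcases j with ⟨j, hj'⟩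
  split_ifs <;> simp only [Fin.mk.injEq] at * <;> omega

lemma hmat_apply' {n m : ℕ} (i j : Fin n) :
    Hmat n m i j = if i = sig m j then 1 else 0 := by
  rw [hmat_apply]
  congr 1
  simp only [eq_iff_iff]
  constructor
  · rintro rfl; rw [sig_invol]
  · rintro rfl; rw [sig_invol]

lemma mulH {n m : ℕ} (M : Matrix (Fin n) (Fin n) ℂ) (i j : Fin n) :
    (M * Hmat n m) i j = M i (sig m j) := by
  simp only [Matrix.mul_apply, hmat_apply', mul_ite, mul_one, mul_zero,
    Finset.sum_ite_eq', Finset.mem_univ, if_true]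

lemma Hmul {n m : ℕ} (M : Matrix (Fin n) (Fin n) ℂ) (i j : Fin n) :
    (Hmat n m * M) i j = M (sig m i) j := by
  simp only [Matrix.mul_apply, hmat_apply, ite_mul, one_mul, zero_mul,
    Finset.sum_ite_eq', Finset.mem_univ, if_true]


lemma mem_u_iff {n m : ℕ} (X : Matrix (Fin n) (Fin n) ℂ) :
    X.transpose * Hmat n m + Hmat n m * X.map (starRingEnd ℂ) = 0 ↔
    ∀ i j, X i j = -1 * (starRingEnd ℂ) (X (sig m j) (sig m i)) := by
  have hentry : ∀ i j : Fin n,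
      (X.transpose * Hmat n m + Hmat n m * X.map (starRingEnd ℂ)) i j
        = X (sig m j) i + (starRingEnd ℂ) (X (sig m i) j) := by
    intro i j
    rw [Matrix.add_apply, mulH, Hmul, Matrix.transpose_apply, Matrix.map_apply]
  constructor
  · intro h i j
    have h0 : (X.transpose * Hmat n m + Hmat n m * X.map (starRingEnd ℂ)) j (sig m i) = 0 := by
      rw [h]; simp
    rw [hentry, sig_invol] at h0
    linear_combination h0
  · intro h
    ext i j
    rw [hentry, Matrix.zero_apply, h (sig m j) i, sig_invol]
    ring


lemma sig_val_last {n : ℕ} {m : ℕ} (hm : 1 ≤ m) (i : Fin n) :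
    (sig m i).1 = n - 1 ↔ i.1 = 0 := by
  have hi := i.isLt
  unfold sig
  split_ifs with h <;> (try simp only [Fin.val_mk]) <;> omega

lemma sig_val_zero {n : ℕ} {m : ℕ} (hm : 1 ≤ m) (i : Fin n) :
    (sig m i).1 = 0 ↔ i.1 = n - 1 := by
  have hi := i.isLt
  unfold sig
  split_ifs with h <;> (try simp only [Fin.val_mk]) <;> omega

noncomputable def Cp (n : ℕ) : Submodule ℂ (Matrix (Fin n) (Fin n) ℂ) where
  carrier := {X | (∀ i j : Fin n, j.1 = 0 → i.1 ≠ 0 → X i j = 0) ∧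
                  (∀ i j : Fin n, i.1 = n - 1 → j.1 ≠ n - 1 → X i j = 0)}
  zero_mem' := ⟨fun _ _ _ _ => rfl, fun _ _ _ _ => rfl⟩
  add_mem' := by
    rintro X Y ⟨hX1, hX2⟩ ⟨hY1, hY2⟩
    exact ⟨fun i j a b => by simp [Matrix.add_apply, hX1 i j a b, hY1 i j a b],
           fun i j a b => by simp [Matrix.add_apply, hX2 i j a b, hY2 i j a b]⟩
  smul_mem' := by
    rintro c X ⟨h1, h2⟩
    exact ⟨fun i j a b => by simp [Matrix.smul_apply, h1 i j a b],
           fun i j a b => by simp [Matrix.smul_apply, h2 i j a b]⟩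

lemma mem_Cp {n : ℕ} (X : Matrix (Fin n) (Fin n) ℂ) :
    X ∈ Cp n ↔ (∀ i j : Fin n, j.1 = 0 → i.1 ≠ 0 → X i j = 0) ∧
      (∀ i j : Fin n, i.1 = n - 1 → j.1 ≠ n - 1 → X i j = 0) := Iff.rfl

noncomputable def Fsub (n m : ℕ) (ε : ℂ) : Submodule ℝ (Matrix (Fin n) (Fin n) ℂ) where
  carrier := {X | X ∈ Cp n ∧ ∀ i j, X i j = ε * (starRingEnd ℂ) (X (sig m j) (sig m i))}
  zero_mem' := ⟨(Cp n).zero_mem, fun i j => by simp⟩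
  add_mem' := by
    rintro X Y ⟨hX1, hX2⟩ ⟨hY1, hY2⟩
    refine ⟨(Cp n).add_mem hX1 hY1, fun i j => ?_⟩
    simp only [Matrix.add_apply, map_add, mul_add]
    rw [← hX2 i j, ← hY2 i j]
  smul_mem' := by
    rintro r X ⟨hX1, hX2⟩
    refine ⟨⟨fun i j a b => by simp [Matrix.smul_apply, (mem_Cp X).1 hX1 |>.1 i j a b],
            fun i j a b => by simp [Matrix.smul_apply, (mem_Cp X).1 hX1 |>.2 i j a b]⟩,
           fun i j => ?_⟩
    simp only [Matrix.smul_apply, Complex.real_smul, map_mul, Complex.conj_ofReal]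
    rw [hX2 i j]
    ring

lemma mem_Fsub {n m : ℕ} (ε : ℂ) (X : Matrix (Fin n) (Fin n) ℂ) :
    X ∈ Fsub n m ε ↔ X ∈ Cp n ∧
      ∀ i j, X i j = ε * (starRingEnd ℂ) (X (sig m j) (sig m i)) := Iff.rfl


lemma inf_eq_bot {n m : ℕ} : Fsub n m (-1) ⊓ Fsub n m 1 = ⊥ := by
  rw [eq_bot_iff]
  rintro X hX
  obtain ⟨⟨_, h1⟩, ⟨_, h2⟩⟩ := Submodule.mem_inf.1 hX
  rw [Submodule.mem_bot]
  ext i j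
  rw [Matrix.zero_apply]
  linear_combination (h1 i j + h2 i j) / 2

lemma sup_eq {n m : ℕ} (hm : 1 ≤ m) :
    Fsub n m (-1) ⊔ Fsub n m 1 = (Cp n).restrictScalars ℝ := by
  apply le_antisymm
  · exact sup_le (fun X hX => hX.1) (fun X hX => hX.1)
  · intro X hX
    rw [Submodule.restrictScalars_mem] at hX
    obtain ⟨hc, hr⟩ := (mem_Cp X).1 hX
    set A : Matrix (Fin n) (Fin n) ℂ :=
      fun i j => (1/2 : ℂ) * (X i j - (starRingEnd ℂ) (X (sig m j) (sig m i))) with hA_def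
    set B : Matrix (Fin n) (Fin n) ℂ :=
      fun i j => (1/2 : ℂ) * (X i j + (starRingEnd ℂ) (X (sig m j) (sig m i))) with hB_def
    have hYc : ∀ i j : Fin n, j.1 = 0 → i.1 ≠ 0 →
        (starRingEnd ℂ) (X (sig m j) (sig m i)) = 0 := by
      intro i j a b
      rw [hr (sig m j) (sig m i) ((sig_val_last hm j).2 a)
        (fun h => b ((sig_val_last hm i).1 h)), map_zero]
    have hYr : ∀ i j : Fin n, i.1 = n - 1 → j.1 ≠ n - 1 →
        (starRingEnd ℂ) (X (sig m j) (sig m i)) = 0 := by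
      intro i j a b
      rw [hc (sig m j) (sig m i) ((sig_val_zero hm i).2 a)
        (fun h => b ((sig_val_zero hm j).1 h)), map_zero]
    have hA : A ∈ Fsub n m (-1) := by
      refine ⟨⟨fun i j a b => ?_, fun i j a b => ?_⟩, fun i j => ?_⟩
      · simp [hA_def, hc i j a b, hYc i j a b]
      · simp [hA_def, hr i j a b, hYr i j a b]
      · have h2 : (starRingEnd ℂ) (1/2 : ℂ) = 1/2 := by
          rw [map_div₀, map_one, map_ofNat]
        simp only [hA_def, map_mul, map_sub, Complex.conj_conj, sig_invol, h2]
        ring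
    have hB : B ∈ Fsub n m 1 := by
      refine ⟨⟨fun i j a b => ?_, fun i j a b => ?_⟩, fun i j => ?_⟩
      · simp [hB_def, hc i j a b, hYc i j a b]
      · simp [hB_def, hr i j a b, hYr i j a b]
      · have h2 : (starRingEnd ℂ) (1/2 : ℂ) = 1/2 := by
          rw [map_div₀, map_one, map_ofNat]
        simp only [hB_def, map_mul, map_add, Complex.conj_conj, sig_invol, h2]
        ring
    have hXeq : X = A + B := by
      ext i j
      rw [Matrix.add_apply]
      simp only [Matrix.add_apply, hA_def, hB_def]
      ring
    rw [hXeq]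
    exact Submodule.add_mem_sup hA hB


lemma entry_congr {n : ℕ} (X : Matrix (Fin n) (Fin n) ℂ) {a b c d : Fin n}
    (h1 : a.1 = c.1) (h2 : b.1 = d.1) : X a b = X c d := by
  rw [show a = c from Fin.ext h1, show b = d from Fin.ext h2]

noncomputable def FGequiv (n m : ℕ) : (Fsub n m (-1)) ≃ₗ[ℝ] (Fsub n m 1) where
  toFun x := ⟨Complex.I • x.1, (Cp n).smul_mem Complex.I x.2.1, fun i j => by
    simp only [Matrix.smul_apply, smul_eq_mul, map_mul, Complex.conj_I, one_mul]
    rw [x.2.2 i j]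
    ring⟩
  invFun y := ⟨(-Complex.I) • y.1, (Cp n).smul_mem (-Complex.I) y.2.1, fun i j => by
    simp only [Matrix.smul_apply, smul_eq_mul, map_mul, map_neg, Complex.conj_I, neg_neg]
    rw [y.2.2 i j]
    ring⟩
  map_add' x y := by
    apply Subtype.ext
    simp [smul_add]
  map_smul' r x := by
    apply Subtype.ext
    simp only [SetLike.val_smul, RingHom.id_apply]
    exact smul_comm Complex.I r x.1
  left_inv x := by
    apply Subtype.ext
    simp only [smul_smul, neg_mul, Complex.I_mul_I, neg_neg, one_smul]
  right_inv y := by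
    apply Subtype.ext
    simp only [smul_smul, mul_neg, Complex.I_mul_I, neg_neg, one_smul]

lemma sAlg_eq {n m : ℕ} (hm : 1 ≤ m) (hn : 2 ≤ n) : sAlg n m = Fsub n m (-1) := by
  ext X
  have hmem : X ∈ sAlg n m ↔
      (X.transpose * Hmat n m + Hmat n m * X.map (starRingEnd ℂ) = 0 ∧
        ∀ i : Fin n, i.1 ≠ 0 → X i ⟨0, Nat.pos_of_ne_zero (fun h => by subst h; exact absurd i.isLt (by omega))⟩ = 0) := Iff.rfl
  rw [hmem, mem_Fsub]
  constructor
  · rintro ⟨h1, h2⟩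
    have hu := (mem_u_iff X).1 h1
    have col : ∀ i j : Fin n, j.1 = 0 → i.1 ≠ 0 → X i j = 0 := by
      intro i j a b
      have hj : j = ⟨0, by omega⟩ := Fin.ext (by first | omega | (simp only [Fin.val_mk]; omega))
      rw [hj]
      exact h2 i b
    refine ⟨⟨col, ?_⟩, hu⟩
    intro i j a b
    rw [hu i j, col (sig m j) (sig m i) ((sig_val_zero hm i).2 a)
      (fun h => b ((sig_val_zero hm j).1 h))]
    simp
  · rintro ⟨hcp, hrel⟩
    exact ⟨(mem_u_iff X).2 hrel, fun i hi => ((mem_Cp X).1 hcp).1 i _ rfl hi⟩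

noncomputable def cpEquiv (n : ℕ) (hn : 2 ≤ n) :
    (Cp n) ≃ₗ[ℂ] (Matrix (Fin (n-1)) (Fin (n-1)) ℂ × ℂ × ℂ) where
  toFun X := (fun i j => X.1 ⟨i.1, by have := i.isLt; omega⟩ ⟨j.1 + 1, by have := j.isLt; omega⟩,
              X.1 ⟨0, by omega⟩ ⟨0, by omega⟩,
              X.1 ⟨n-1, by omega⟩ ⟨n-1, by omega⟩)
  map_add' X Y := rfl
  map_smul' c X := rfl
  invFun P := ⟨fun i j =>
      if hi : i.1 = n - 1 then (if j.1 = n - 1 then P.2.2 else 0)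
      else if hj : j.1 = 0 then (if i.1 = 0 then P.2.1 else 0)
      else P.1 ⟨i.1, by have := i.isLt; omega⟩ ⟨j.1 - 1, by have := j.isLt; omega⟩, by
    constructor
    · intro i j a b
      have hin := i.isLt
      beta_reduce
      split_ifs <;> first | rfl | omega
    · intro i j a b
      beta_reduce
      split_ifs <;> first | rfl | omega⟩
  left_inv X := by
    apply Subtype.ext
    funext i j
    have hi := i.isLt
    have hj := j.isLt
    dsimp only
    by_cases h1 : i.1 = n - 1
    · rw [dif_pos h1]
      by_cases h2 : j.1 = n - 1
      · rw [if_pos h2]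
        refine entry_congr _ ?_ ?_ <;>
          first | rfl | omega | (simp only [Fin.val_mk]; omega)
      · rw [if_neg h2]
        exact (((mem_Cp X.1).1 X.2).2 i j h1 h2).symm
    · rw [dif_neg h1]
      by_cases h2 : j.1 = 0
      · rw [dif_pos h2]
        by_cases h3 : i.1 = 0
        · rw [if_pos h3]
          refine entry_congr _ ?_ ?_ <;>
            first | rfl | omega | (simp only [Fin.val_mk]; omega)
        · rw [if_neg h3]
          exact (((mem_Cp X.1).1 X.2).1 i j h2 h3).symm
      · rw [dif_neg h2]
        refine entry_congr _ ?_ ?_ <;>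
          first | rfl | omega | (simp only [Fin.val_mk]; omega)
  right_inv P := by
    refine Prod.ext ?_ (Prod.ext ?_ ?_)
    · funext i j
      have hi := i.isLt
      have hj := j.isLt
      dsimp only
      rw [dif_neg (by first | omega | (simp only [Fin.val_mk]; omega)), dif_neg (by first | omega | (simp only [Fin.val_mk]; omega))]
      refine entry_congr P.1 ?_ ?_ <;> first | rfl | omega | (simp only [Fin.val_mk]; omega) | (simp only [Fin.val_mk])
    · dsimp only
      rw [dif_neg (by first | omega | (simp only [Fin.val_mk]; omega)), dif_pos (by first | rfl | simp only [Fin.val_mk]),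
        if_pos (by first | rfl | simp only [Fin.val_mk])]
    · dsimp only
      rw [dif_pos (by first | rfl | simp only [Fin.val_mk]), if_pos (by first | rfl | simp only [Fin.val_mk])]

lemma finrank_Cp (n : ℕ) (hn : 2 ≤ n) :
    Module.finrank ℂ (Cp n) = (n-1)*(n-1) + 2 := by
  rw [LinearEquiv.finrank_eq (cpEquiv n hn)]
  simp [Module.finrank_prod, Module.finrank_matrix, Module.finrank_self]

end Stmt4Aux

/-- The Lie algebra s of the group S has real dimension n² − 2n + 3. -/
theorem stmt4 {n m : ℕ} (hm : 1 ≤ m) (hnm : 2 * m ≤ n) (hn : 2 ≤ n) :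
    Module.finrank ℝ (sAlg n m) = n ^ 2 - 2 * n + 3 := by
  classical
  rw [Stmt4Aux.sAlg_eq hm hn]
  have e1 := Submodule.finrank_sup_add_finrank_inf_eq (Stmt4Aux.Fsub n m (-1))
    (Stmt4Aux.Fsub n m 1)
  rw [Stmt4Aux.sup_eq hm, Stmt4Aux.inf_eq_bot, finrank_bot, add_zero] at e1
  have e2 : Module.finrank ℝ (Stmt4Aux.Fsub n m (-1)) =
      Module.finrank ℝ (Stmt4Aux.Fsub n m 1) :=
    LinearEquiv.finrank_eq (Stmt4Aux.FGequiv n m)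
  have e3 : Module.finrank ℝ ((Stmt4Aux.Cp n).restrictScalars ℝ) =
      Module.finrank ℝ (Stmt4Aux.Cp n) :=
    LinearEquiv.finrank_eq
      ((Submodule.restrictScalarsEquiv ℝ ℂ _ (Stmt4Aux.Cp n)).restrictScalars ℝ)
  have e4 : Module.finrank ℝ ℂ * Module.finrank ℂ (Stmt4Aux.Cp n) =
      Module.finrank ℝ (Stmt4Aux.Cp n) :=
    Module.finrank_mul_finrank ℝ ℂ _
  rw [Complex.finrank_real_complex, Stmt4Aux.finrank_Cp n hn] at e4
  have key : (n-1)*(n-1) + 2 = n^2 - 2*n + 3 := by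
    have h2 : 2*n ≤ n^2 := by nlinarith
    zify [show 1 ≤ n by omega, h2]
    ring
  rw [← key]
  obtain ⟨q, hq⟩ : ∃ q, (n-1)*(n-1) + 2 = q := ⟨_, rfl⟩
  rw [hq] at e4 ⊢
  omega
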